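/- Let a₀ < 0 and set T* = −1/(12 a₀) > 0. Then for u(x,y,t) = a₀/(1 + 12 a₀ t) · x² y² − (2/3) ln(1 + 12 a₀ t): (i) if (x,y) ∈ [0,1]² with x = 0 or y = 0, then u(x,y,t) → +∞ as t ↗ T*; (ii) if (x,y) ∈ [0,1]² with x ≠ 0 and y ≠ 0, then u(x,y,t) → −∞ as t ↗ T*. -/

import Mathlib

noncomputable section

/-- The explicit solution on the unit square. -/
def U (a₀ x y t : ℝ) : ℝ :=
  a₀ / (1 + 12 * a₀ * t) * x ^ 2 * y ^ 2 - (2 / 3) * Real.log (1 + 12 * a₀ * t)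

open Filter Real Topology

lemma eps_tendsto (a₀ : ℝ) (ha : a₀ < 0) :
    Tendsto (fun t : ℝ => 1 + 12 * a₀ * t)
      (nhdsWithin (-1 / (12 * a₀)) (Set.Iio (-1 / (12 * a₀)))) (𝓝[>] (0:ℝ)) := by
  have h12 : (12 : ℝ) * a₀ ≠ 0 := by nlinarith
  have hval : 1 + 12 * a₀ * (-1 / (12 * a₀)) = 0 := by field_simp; rw [div_self ha.ne]; ring
  apply tendsto_nhdsWithin_of_tendsto_nhds_of_eventually_within
  · have : Continuous (fun t : ℝ => 1 + 12 * a₀ * t) := by continuity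
    have h := (this.tendsto (-1 / (12 * a₀))).mono_left
      (nhdsWithin_le_nhds (s := Set.Iio (-1 / (12 * a₀))))
    simpa [hval] using h
  · filter_upwards [self_mem_nhdsWithin] with t (ht : t < -1 / (12 * a₀))
    have h12' : 12 * a₀ < 0 := by nlinarith
    have : 12 * a₀ * t > 12 * a₀ * (-1 / (12 * a₀)) := by
      exact (mul_lt_mul_left_of_neg h12').mpr ht
    simp only [Set.mem_Ioi]
    nlinarith

lemma eps_log_tendsto : Tendsto (fun ε : ℝ => ε * Real.log ε) (𝓝[>] (0:ℝ)) (𝓝 0) := by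
  have h := tendsto_log_mul_rpow_nhdsGT_zero (r := 1) one_pos
  apply h.congr'
  filter_upwards [self_mem_nhdsWithin] with ε (hε : 0 < ε)
  rw [Real.rpow_one, mul_comm]

/-- For `a₀ < 0` and `T* = −1/(12a₀)`: the solution tends to `+∞` as `t ↗ T*` on the axes
`x = 0` or `y = 0` of `[0,1]²`, and to `−∞` elsewhere in `[0,1]²`. -/
theorem stmt3 (a₀ x y : ℝ) (ha : a₀ < 0)
    (hx : x ∈ Set.Icc (0:ℝ) 1) (hy : y ∈ Set.Icc (0:ℝ) 1) :
    (x = 0 ∨ y = 0 →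
      Filter.Tendsto (fun t => U a₀ x y t) (nhdsWithin (-1 / (12 * a₀)) (Set.Iio (-1 / (12 * a₀))))
        Filter.atTop) ∧
    (x ≠ 0 ∧ y ≠ 0 →
      Filter.Tendsto (fun t => U a₀ x y t) (nhdsWithin (-1 / (12 * a₀)) (Set.Iio (-1 / (12 * a₀))))
        Filter.atBot) := by
  have hmap := eps_tendsto a₀ ha
  constructor
  · intro hxy
    have hg : Tendsto (fun ε : ℝ => a₀ / ε * x ^ 2 * y ^ 2 - (2 / 3) * Real.log ε)
        (𝓝[>] (0:ℝ)) atTop := by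
      have h1 : Tendsto (fun ε : ℝ => (2 / 3 : ℝ) * (-Real.log ε)) (𝓝[>] (0:ℝ)) atTop :=
        (tendsto_neg_atBot_atTop.comp Real.tendsto_log_nhdsGT_zero).const_mul_atTop
          (by norm_num)
      apply h1.congr
      intro ε
      rcases hxy with h | h <;> simp [h] <;> ring
    exact hg.comp hmap
  · rintro ⟨hx0, hy0⟩
    have hc : a₀ * x ^ 2 * y ^ 2 < 0 := by
      have : 0 < x ^ 2 * y ^ 2 := by positivity
      nlinarith
    have hg : Tendsto (fun ε : ℝ => a₀ / ε * x ^ 2 * y ^ 2 - (2 / 3) * Real.log ε)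
        (𝓝[>] (0:ℝ)) atBot := by
      have hinv : Tendsto (fun ε : ℝ => ε⁻¹) (𝓝[>] (0:ℝ)) atTop := tendsto_inv_nhdsGT_zero
      have h2 : Tendsto (fun ε : ℝ => a₀ * x ^ 2 * y ^ 2 - (2 / 3) * (ε * Real.log ε))
          (𝓝[>] (0:ℝ)) (𝓝 (a₀ * x ^ 2 * y ^ 2)) := by
        have := eps_log_tendsto.const_mul (2 / 3 : ℝ)
        simpa using (tendsto_const_nhds (x := a₀ * x ^ 2 * y ^ 2)).sub this
      have h3 := hinv.atTop_mul_neg hc h2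
      apply h3.congr'
      filter_upwards [self_mem_nhdsWithin] with ε (hε : 0 < ε)
      field_simp
    exact hg.comp hmap
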